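/- For each k ≥ 0 and prime power q, if M is obtained from a GF(q)-representable matroid by k truncations, then ε(M) ≤ (q^{r(M)+k} - 1)/(q - 1); and the truncation to rank n of PG(n+k-1, q) achieves equality, i.e., has exactly (q^{n+k} - 1)/(q - 1) points for n ≥ 2. -/

import Mathlib

open Matroid Set

namespace GrowthRate

variable {α : Type*}

/-- The rank of a set in a matroid: the supremum of cardinalities of independent subsets. -/
noncomputable def eRk (M : Matroid α) (X : Set α) : ℕ∞ :=
  ⨆ I ∈ {I : Set α | M.Indep I ∧ I ⊆ X}, I.encard

/-- The rank of a matroid. -/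
noncomputable def eRank (M : Matroid α) : ℕ∞ := eRk M M.E

/-- Rank as a natural number (for finite matroids). -/
noncomputable def rk (M : Matroid α) (X : Set α) : ℕ := (eRk M X).toNat

/-- Rank of a matroid as a natural number. -/
noncomputable def rank (M : Matroid α) : ℕ := (eRank M).toNat

/-- Deletion of a set of elements. -/
noncomputable def delete (M : Matroid α) (D : Set α) : Matroid α := M ↾ (M.E \ D)

/-- Contraction of a set of elements, defined via duality. -/
noncomputable def contract (M : Matroid α) (C : Set α) : Matroid α := (delete M✶ C)✶

/-- `N` is a minor of `M` if it is obtained by a contraction followed by a deletion. -/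
def IsMinor (N M : Matroid α) : Prop := ∃ C D : Set α, N = delete (contract M C) D

/-- The number of points (rank-one flats) of `M` contained in `X`. -/
noncomputable def nPoints (M : Matroid α) (X : Set α) : ℕ :=
  {P : Set α | M.IsFlat P ∧ eRk M P = 1 ∧ P ⊆ X}.ncard

/-- `ε(M)`: the number of points (rank-one flats) of `M`. -/
noncomputable def eps (M : Matroid α) : ℕ := {P : Set α | M.IsFlat P ∧ eRk M P = 1}.ncard

/-- A matroid is simple if all singletons and pairs of ground elements are independent. -/
def Simple (M : Matroid α) : Prop :=
  ∀ e ∈ M.E, ∀ f ∈ M.E, M.Indep {e} ∧ (e ≠ f → M.Indep {e, f})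

/-- `M` has a `U_{2,m}`-minor: a minor that is simple of rank two with `m` elements. -/
def HasUnifLineMinor (M : Matroid α) (m : ℕ) : Prop :=
  ∃ N : Matroid α, IsMinor N M ∧ eRank N = 2 ∧ Simple N ∧ N.E.encard = m

/-- A matroid is weakly round if its ground set is not the union of a set of rank
at most `r(M)-2` and a set of rank at most `r(M)-1`. -/
def WeaklyRound (M : Matroid α) : Prop :=
  ¬ ∃ A B : Set α, A ∪ B = M.E ∧ eRk M A + 2 ≤ eRank M ∧ eRk M B + 1 ≤ eRank M

/-- `q` is a prime power. -/
def IsPrimePower (q : ℕ) : Prop := ∃ p n : ℕ, p.Prime ∧ 0 < n ∧ q = p ^ n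

/-- `M` is isomorphic to the projective geometry `PG(n-1, |F|)` over the finite field `F`:
there is a representation `f` of `M` by vectors in `F^n` such that distinct elements get
non-parallel vectors and every direction in `F^n` is represented. -/
def IsPG (M : Matroid α) (F : Type) [Field F] [Fintype F] (n : ℕ) : Prop :=
  ∃ f : α → (Fin n → F),
    (∀ I ⊆ M.E, (M.Indep I ↔ LinearIndependent F (fun x : I => f x))) ∧
    (∀ e ∈ M.E, ∀ e' ∈ M.E, ∀ c : F, f e' = c • f e → e = e') ∧
    (∀ v : Fin n → F, v ≠ 0 → ∃ e ∈ M.E, ∃ c : F, c ≠ 0 ∧ v = c • f e)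

/-- `M` is `(q,k)`-overfull. -/
noncomputable def Overfull (M : Matroid α) (q k : ℕ) : Prop :=
  ((q : ℚ) ^ (rank M + k) - 1) / ((q : ℚ) - 1)
      - (q : ℚ) * ((q : ℚ) ^ (2 * k) - 1) / ((q : ℚ) ^ 2 - 1) < (eps M : ℚ)

/-- `N` is the truncation of `M`. -/
def IsTruncationOf (N M : Matroid α) : Prop :=
  N.E = M.E ∧ ∀ X ⊆ M.E, eRk N X = min (eRk M X) (eRank M - 1)

/-- `M` is representable over the field `F`. -/
def IsRepresentable (M : Matroid α) (F : Type) [Field F] : Prop :=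
  ∃ (n : ℕ) (f : α → (Fin n → F)),
    ∀ I ⊆ M.E, (M.Indep I ↔ LinearIndependent F (fun x : I => f x))

/-- `M` is obtained from `M₀` by `k` successive truncations. -/
def IsKFoldTruncationOf (M M₀ : Matroid α) (k : ℕ) : Prop :=
  ∃ g : ℕ → Matroid α, g 0 = M₀ ∧ (∀ i < k, IsTruncationOf (g (i + 1)) (g i)) ∧ g k = M

lemma le_eRk {M : Matroid α} {I X : Set α} (hI : M.Indep I) (hIX : I ⊆ X) :
    I.encard ≤ eRk M X := by
  refine le_trans ?_ (le_iSup₂ (f := fun I _ => I.encard) I ⟨hI, hIX⟩); rfl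

lemma eRk_le {M : Matroid α} {X : Set α} {c : ℕ∞}
    (h : ∀ I, M.Indep I → I ⊆ X → I.encard ≤ c) : eRk M X ≤ c :=
  iSup₂_le fun I hI => h I hI.1 hI.2

lemma eRk_eq_of_basis' {M : Matroid α} {I X : Set α} (hI : M.IsBasis' I X) :
    eRk M X = I.encard := by
  refine le_antisymm (eRk_le fun J hJ hJX => ?_) (le_eRk hI.indep hI.subset)
  obtain ⟨J', hJ', hJJ'⟩ := hJ.subset_isBasis'_of_subset hJX
  exact (encard_mono hJJ').trans
    ((Matroid.isBase_restrict_iff'.2 hJ').encard_eq_encard_of_isBase (Matroid.isBase_restrict_iff'.2 hI)).le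

lemma eRk_eq_of_basis {M : Matroid α} {I X : Set α} (hI : M.IsBasis I X) :
    eRk M X = I.encard := eRk_eq_of_basis' hI.isBasis'

lemma eRk_mono {M : Matroid α} {X Y : Set α} (h : X ⊆ Y) : eRk M X ≤ eRk M Y :=
  eRk_le fun I hI hIX => le_eRk hI (hIX.trans h)

lemma eRk_le_eRank (M : Matroid α) (X : Set α) : eRk M X ≤ eRank M :=
  eRk_le fun I hI _ => le_eRk hI hI.subset_ground

lemma eRk_ne_top {M : Matroid α} (hM : M.Finite) (X : Set α) : eRk M X ≠ ⊤ := by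
  refine ne_top_of_le_ne_top ?_ (eRk_le fun I hI _ => encard_mono hI.subset_ground)
  simpa [encard_ne_top_iff] using hM.ground_finite

lemma eRank_ne_top {M : Matroid α} (hM : M.Finite) : eRank M ≠ ⊤ := eRk_ne_top hM M.E

lemma eRk_insert_le (M : Matroid α) (e : α) (X : Set α) :
    eRk M (insert e X) ≤ eRk M X + 1 := by
  refine eRk_le fun I hI hIX => ?_
  calc I.encard ≤ (I \ {e}).encard + 1 := by
        rcases em (e ∈ I) with he | he
        · rw [← encard_diff_singleton_add_one he]
        · rw [diff_singleton_eq_self he]; exact le_self_add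
    _ ≤ eRk M X + 1 := by
        gcongr
        exact le_eRk (hI.subset diff_subset) (fun x hx => (hIX hx.1).resolve_left hx.2)

lemma mem_closure_iff_eRk {M : Matroid α} (hM : M.Finite) {X : Set α} {e : α}
    (hX : X ⊆ M.E) (he : e ∈ M.E) :
    e ∈ M.closure X ↔ eRk M (insert e X) = eRk M X := by
  obtain ⟨I, hI⟩ := M.exists_isBasis X hX
  constructor
  · intro hecl
    refine le_antisymm ?_ (eRk_mono (subset_insert _ _))
    have hb : M.IsBasis I (insert e X) := by
      refine hI.indep.isBasis_of_subset_of_subset_closure (hI.subset.trans (subset_insert _ _)) ?_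
      rw [hI.closure_eq_closure]
      exact insert_subset hecl (M.subset_closure X hX)
    rw [eRk_eq_of_basis hb, eRk_eq_of_basis hI]
  · intro hrk
    by_contra hecl
    have heI : e ∉ I := fun h => hecl (M.subset_closure X hX (hI.subset h))
    have hind : M.Indep (insert e I) := by
      rw [hI.indep.insert_indep_iff_of_notMem heI, hI.closure_eq_closure]
      exact ⟨he, hecl⟩
    have := le_eRk hind (insert_subset_insert hI.subset)
    rw [encard_insert_of_notMem heI, hrk, eRk_eq_of_basis hI] at this
    have hfin : I.encard ≠ ⊤ := by
      rw [← eRk_eq_of_basis hI]; exact eRk_ne_top hM X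
    exact (ENat.lt_add_one_iff hfin).2 le_rfl |>.not_ge this

lemma flat_iff_eRk {M : Matroid α} (hM : M.Finite) {P : Set α} (hP : P ⊆ M.E) :
    M.IsFlat P ↔ ∀ e ∈ M.E \ P, eRk M (insert e P) ≠ eRk M P := by
  constructor
  · intro h e ⟨heE, heP⟩ hrk
    exact heP (h.closure ▸ (mem_closure_iff_eRk hM hP heE).2 hrk)
  · intro h
    refine ⟨fun I X hIP hIX x hxX => by_contra fun hxP => ?_, hP⟩
    have hxE : x ∈ M.E := hIX.subset_ground hxX
    have hxcl : x ∈ M.closure P := by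
      have := hIX.subset_closure hxX
      rwa [hIP.closure_eq_closure] at this
    exact h x ⟨hxE, hxP⟩ ((mem_closure_iff_eRk hM hP hxE).1 hxcl)

lemma flat_closure {M : Matroid α} (hM : M.Finite) {X : Set α} (hX : X ⊆ M.E) :
    M.IsFlat (M.closure X) := by
  rw [flat_iff_eRk hM (M.closure_subset_ground X)]
  intro e ⟨heE, hecl⟩ hrk
  exact hecl (by simpa using (mem_closure_iff_eRk hM (M.closure_subset_ground X) heE).2 hrk)

lemma exists_nonloop_of_point {M : Matroid α} {P : Set α} (hP : M.IsFlat P)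
    (h1 : eRk M P = 1) : ∃ e ∈ P, M.Indep {e} := by
  obtain ⟨I, hI⟩ := M.exists_isBasis P hP.subset_ground
  rw [eRk_eq_of_basis hI] at h1
  obtain ⟨a, rfl⟩ := encard_eq_one.1 h1
  exact ⟨a, hI.subset rfl, hI.indep⟩

lemma point_eq_closure {M : Matroid α} {P : Set α} {e : α} (hP : M.IsFlat P)
    (h1 : eRk M P = 1) (heP : e ∈ P) (he : M.Indep {e}) : P = M.closure {e} := by
  obtain ⟨I, hI, heI⟩ := he.subset_isBasis_of_subset (singleton_subset_iff.2 heP)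
    hP.subset_ground
  have : I = {e} := by
    rw [eRk_eq_of_basis hI] at h1
    obtain ⟨a, rfl⟩ := encard_eq_one.1 h1
    obtain rfl : e = a := heI rfl
    rfl
  subst this
  refine subset_antisymm ?_ ?_
  · exact hI.subset_closure
  · exact hP.closure ▸ M.closure_subset_closure (singleton_subset_iff.2 heP)

lemma eRk_closure_singleton {M : Matroid α} {e : α} (he : M.Indep {e}) :
    eRk M (M.closure {e}) = 1 := by
  rw [eRk_eq_of_basis he.isBasis_closure, encard_singleton]

lemma closure_singleton_eq_of_mem {M : Matroid α} (hM : M.Finite) {e e' : α}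
    (he : M.Indep {e}) (he' : M.Indep {e'}) (h : e' ∈ M.closure {e}) :
    M.closure {e'} = M.closure {e} :=
  (point_eq_closure (flat_closure hM he.subset_ground) (eRk_closure_singleton he) h he').symm

/-- The set of points of a matroid. -/
def pts (M : Matroid α) : Set (Set α) := {P | M.IsFlat P ∧ eRk M P = 1}

lemma pts_finite {M : Matroid α} (hM : M.Finite) : (pts M).Finite :=
  Set.Finite.subset hM.ground_finite.finite_subsets (fun P hP => hP.1.subset_ground)

lemma point_iff_of_eRk_one {M : Matroid α} (hM : M.Finite) {P : Set α} (hP : P ⊆ M.E)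
    (h1 : eRk M P = 1) :
    M.IsFlat P ↔ ∀ e ∈ M.E \ P, eRk M (insert e P) = 2 := by
  rw [flat_iff_eRk hM hP]
  refine forall₂_congr fun e he => ⟨fun hne => ?_, fun h2 => by rw [h2, h1]; simp⟩
  have hle : eRk M (insert e P) ≤ 2 := by
    have := eRk_insert_le M e P; rwa [h1] at this
  have hge : 1 ≤ eRk M (insert e P) := h1 ▸ eRk_mono (subset_insert _ _)
  rw [h1] at hne
  exact le_antisymm hle (by
    rw [(by norm_num : (2 : ℕ∞) = 1 + 1), ENat.add_one_le_iff (by simp)]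
    exact lt_of_le_of_ne hge (Ne.symm hne))

lemma IsTruncationOf.finite {N M : Matroid α} (h : IsTruncationOf N M) (hM : M.Finite) :
    N.Finite := ⟨h.1 ▸ hM.ground_finite⟩

lemma IsTruncationOf.eRank_eq {N M : Matroid α} (h : IsTruncationOf N M) :
    eRank N = eRank M - 1 := by
  have := h.2 M.E subset_rfl
  rw [eRank, h.1, this, eRank, min_eq_right tsub_le_self]

lemma IsTruncationOf.pts_eq {N M : Matroid α} (h : IsTruncationOf N M) (hM : M.Finite)
    (hr : 3 ≤ eRank M) : pts N = pts M := by
  have hN : N.Finite := h.finite hM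
  have h2 : (2 : ℕ∞) ≤ eRank M - 1 := by
    cases hE : eRank M with
    | top => simp
    | coe n =>
      rw [hE] at hr
      have hn : 3 ≤ n := by exact_mod_cast hr
      rw [show ((n : ℕ∞) - 1) = ((n - 1 : ℕ) : ℕ∞) by simp]
      exact_mod_cast Nat.le_sub_one_of_lt (by omega)
  ext P
  simp only [pts, mem_setOf_eq]
  constructor
  · rintro ⟨hF, h1⟩
    have hPE : P ⊆ M.E := h.1 ▸ hF.subset_ground
    have hPM : eRk M P = 1 := by
      have := h.2 P hPE
      rw [h1] at this
      rcases min_eq_iff.1 this.symm with ⟨ha, -⟩ | ⟨hb, -⟩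
      · exact ha
      · exact absurd (hb ▸ h2) (by norm_num)
    refine ⟨?_, hPM⟩
    rw [flat_iff_eRk hM hPE]
    intro e ⟨heE, heP⟩ hrk
    have hFe := (flat_iff_eRk hN (h.1 ▸ hPE)).1 hF e ⟨h.1 ▸ heE, heP⟩
    refine hFe ?_
    rw [h.2 _ (insert_subset heE hPE), h.2 _ hPE, hrk]
  · rintro ⟨hF, h1⟩
    have hPE : P ⊆ M.E := hF.subset_ground
    have hP1 : eRk N P = 1 := by
      rw [h.2 P hPE, h1, min_eq_left (le_trans (by norm_num) h2)]
    refine ⟨?_, hP1⟩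
    rw [flat_iff_eRk hN (h.1 ▸ hPE)]
    intro e ⟨heE, heP⟩ hrk
    rw [h.1] at heE
    have h2' := (point_iff_of_eRk_one hM hPE h1).1 hF e ⟨heE, heP⟩
    rw [h.2 _ (insert_subset heE hPE), h2', min_eq_left h2, hP1] at hrk
    norm_num at hrk

lemma IsKFoldTruncationOf.ground_eq {M M₀ : Matroid α} {k : ℕ}
    (h : IsKFoldTruncationOf M M₀ k) : M.E = M₀.E := by
  induction k generalizing M with
  | zero => obtain ⟨g, h0, -, hk⟩ := h; rw [← hk, h0]
  | succ k ih =>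
    obtain ⟨g, h0, hs, hk⟩ := h
    have htr : IsTruncationOf M (g k) := hk ▸ hs k (Nat.lt_succ_self k)
    rw [htr.1, ih ⟨g, h0, fun i hi => hs i (by omega), rfl⟩]

lemma IsKFoldTruncationOf.eRank_eq {M M₀ : Matroid α} {k : ℕ}
    (h : IsKFoldTruncationOf M M₀ k) : eRank M = eRank M₀ - k := by
  induction k generalizing M with
  | zero => obtain ⟨g, h0, -, hk⟩ := h; rw [← hk, h0]; simp
  | succ k ih =>
    obtain ⟨g, h0, hs, hk⟩ := h
    have htr : IsTruncationOf M (g k) := hk ▸ hs k (Nat.lt_succ_self k)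
    rw [htr.eRank_eq, ih ⟨g, h0, fun i hi => hs i (by omega), rfl⟩, tsub_tsub]
    norm_cast

lemma IsKFoldTruncationOf.pts_eq {M M₀ : Matroid α} {k : ℕ}
    (h : IsKFoldTruncationOf M M₀ k) (hM : M.Finite) (h2 : 2 ≤ eRank M) :
    pts M = pts M₀ ∧ eRank M₀ = eRank M + k := by
  induction k generalizing M with
  | zero =>
    obtain ⟨g, h0, -, hk⟩ := h; rw [← hk, h0]; simp
  | succ k ih =>
    obtain ⟨g, h0, hs, hk⟩ := h
    have htr : IsTruncationOf M (g k) := hk ▸ hs k (Nat.lt_succ_self k)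
    have hgkfin : (g k).Finite := by
      have := hM.ground_finite
      rw [htr.1] at this
      exact ⟨this⟩
    have hMne : eRank M ≠ ⊤ := eRank_ne_top hM
    have hgkne : eRank (g k) ≠ ⊤ := eRank_ne_top hgkfin
    have hrank : eRank (g k) = eRank M + 1 := by
      have hE := htr.eRank_eq
      lift eRank (g k) to ℕ using hgkne with a ha
      lift eRank M to ℕ using hMne with b hb
      have h2' : 2 ≤ b := by exact_mod_cast h2
      have : (b : ℕ∞) = (a : ℕ∞) - 1 := hE
      rw [show ((a : ℕ∞) - 1) = ((a - 1 : ℕ) : ℕ∞) by simp] at this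
      have : b = a - 1 := by exact_mod_cast this
      have : a = b + 1 := by omega
      exact_mod_cast this
    have hg3 : 3 ≤ eRank (g k) := by
      rw [hrank]
      calc (3 : ℕ∞) = 2 + 1 := by norm_num
      _ ≤ eRank M + 1 := by gcongr
    have hchain : IsKFoldTruncationOf (g k) M₀ k := ⟨g, h0, fun i hi => hs i (by omega), rfl⟩
    obtain ⟨hpts, herank⟩ := ih hchain hgkfin (le_trans (by norm_num) hg3)
    refine ⟨(htr.pts_eq hgkfin hg3).trans hpts, ?_⟩
    rw [herank, hrank]
    push_cast
    ring

section Rep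

variable {F : Type} [Field F] [Fintype F] {m : ℕ} {M : Matroid α} {f : α → Fin m → F}

lemma indep_singleton_iff (hf : ∀ I ⊆ M.E, (M.Indep I ↔ LinearIndependent F fun x : I => f x))
    {e : α} (he : e ∈ M.E) : M.Indep {e} ↔ f e ≠ 0 := by
  rw [hf {e} (singleton_subset_iff.2 he), linearIndependent_unique_iff]
  simp [Set.default_coe_singleton]

lemma linearIndependent_insert' {ι : Type*} {s : Set ι} {a : ι} {g : ι → Fin m → F} (has : a ∉ s) :
    (LinearIndependent F fun x : (insert a s : Set ι) => g x) ↔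
      (LinearIndependent F fun x : s => g x) ∧ g a ∉ Submodule.span F (g '' s) :=
  linearIndepOn_insert has

lemma mem_closure_of_parallel (hf : ∀ I ⊆ M.E, (M.Indep I ↔ LinearIndependent F fun x : I => f x))
    {e e' : α} {c : F} (he' : e' ∈ M.E) (hie : M.Indep {e}) (hc : f e' = c • f e) :
    e' ∈ M.closure {e} := by
  by_cases heq : e' = e
  · have : e ∈ M.closure {e} := M.subset_closure {e} hie.subset_ground (mem_singleton e)
    rwa [heq]
  · have hni : ¬ M.Indep (insert e' {e}) := by
      rw [hf _ (insert_subset he' hie.subset_ground), linearIndependent_insert' (by simpa using heq)]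
      rintro ⟨-, hsp⟩
      exact hsp (by rw [image_singleton]; exact Submodule.mem_span_singleton.2 ⟨c, hc.symm⟩)
    have hdep : M.Dep (insert e' {e}) := by
      rw [Matroid.dep_iff]
      exact ⟨hni, insert_subset he' hie.subset_ground⟩
    exact ((hie.insert_dep_iff).1 hdep).1

lemma parallel_of_point (hf : ∀ I ⊆ M.E, (M.Indep I ↔ LinearIndependent F fun x : I => f x))
    {P : Set α} {e e' : α} (hP1 : eRk M P = 1) (hPE : P ⊆ M.E) (he : e ∈ P) (he' : e' ∈ P)
    (hie : M.Indep {e}) (hie' : M.Indep {e'}) : ∃ c : F, c ≠ 0 ∧ f e = c • f e' := by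
  have hfe : f e ≠ 0 := (indep_singleton_iff hf (hPE he)).1 hie
  by_cases heq : e = e'
  · exact ⟨1, one_ne_zero, by rw [heq, one_smul]⟩
  · have hni : ¬ M.Indep (insert e {e'}) := by
      intro hind
      have h2 := le_eRk hind (insert_subset he (singleton_subset_iff.2 he'))
      rw [encard_insert_of_notMem (by simpa using heq), encard_singleton, hP1] at h2
      norm_num at h2
    rw [hf _ (insert_subset (hPE he) (singleton_subset_iff.2 (hPE he'))),
      linearIndependent_insert' (by simpa using heq)] at hni
    push_neg at hni
    have hsp := hni ((hf {e'} (singleton_subset_iff.2 (hPE he'))).1 hie')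
    rw [image_singleton] at hsp
    obtain ⟨c, hc⟩ := Submodule.mem_span_singleton.1 hsp
    exact ⟨c, fun h0 => hfe (by rw [← hc, h0, zero_smul]), hc.symm⟩

lemma psi_inj (hM : M.Finite)
    (hf : ∀ I ⊆ M.E, (M.Indep I ↔ LinearIndependent F fun x : I => f x))
    (ep : ↥(pts M) → α) (hep1 : ∀ P, ep P ∈ P.1) (hep2 : ∀ P, M.Indep {ep P}) :
    Function.Injective
      (fun pc : ↥(pts M) × {c : F // c ≠ 0} => (pc.2 : F) • f (ep pc.1)) := by
  rintro ⟨P, c⟩ ⟨P', c'⟩ h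
  simp only at h
  have hie := hep2 P
  have hie' := hep2 P'
  have hE : (ep P) ∈ M.E := by simpa using hie.subset_ground
  have hE' : (ep P') ∈ M.E := by simpa using hie'.subset_ground
  have hfe : f (ep P) ≠ 0 := (indep_singleton_iff hf hE).1 hie
  have hpar : f (ep P') = ((c' : F)⁻¹ * (c : F)) • f (ep P) := by
    rw [mul_smul, h, inv_smul_smul₀ c'.2]
  have hPP' : P = P' := by
    have hmem : ep P' ∈ M.closure {ep P} := mem_closure_of_parallel hf hE' hie hpar
    have h1 : P.1 = M.closure {ep P} := point_eq_closure P.2.1 P.2.2 (hep1 P) hie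
    have h2 : P'.1 = M.closure {ep P'} := point_eq_closure P'.2.1 P'.2.2 (hep1 P') hie'
    refine Subtype.ext ?_
    rw [h1, h2, closure_singleton_eq_of_mem hM hie hie' hmem]
  subst hPP'
  have hcc : (c : F) = (c' : F) := by
    by_contra hne
    have : ((c : F) - (c' : F)) • f (ep P) = 0 := by rw [sub_smul, h, sub_self]
    rcases smul_eq_zero.1 this with h0 | h0
    · exact hne (sub_eq_zero.1 h0)
    · exact hfe h0
  rw [Prod.mk.injEq]
  exact ⟨rfl, Subtype.ext hcc⟩

lemma count_le (hM : M.Finite)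
    (hf : ∀ I ⊆ M.E, (M.Indep I ↔ LinearIndependent F fun x : I => f x)) :
    (pts M).ncard * (Fintype.card F - 1) + 1 ≤ Fintype.card F ^ rank M := by
  classical
  haveI : Module.Finite F (Fin m → F) := Module.Finite.pi
  set W := Submodule.span F (f '' M.E) with hW
  -- dimension bound
  obtain ⟨I, hI⟩ := M.exists_isBasis M.E subset_rfl
  have hIfin : I.Finite := hM.ground_finite.subset hI.indep.subset_ground
  haveI : Fintype ↥(f '' I) := (hIfin.image f).fintype
  have hsub : f '' M.E ⊆ ↑(Submodule.span F (f '' I)) := by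
    rintro - ⟨e, heE, rfl⟩
    by_cases heI : e ∈ I
    · exact Submodule.subset_span ⟨e, heI, rfl⟩
    · have hecl : e ∈ M.closure I := hI.subset_closure heE
      have hni : ¬ M.Indep (insert e I) := by
        intro hind
        rw [hI.indep.insert_indep_iff_of_notMem heI] at hind
        exact hind.2 hecl
      rw [hf _ (insert_subset heE hI.indep.subset_ground),
        linearIndependent_insert' heI] at hni
      push_neg at hni
      exact hni ((hf I hI.indep.subset_ground).1 hI.indep)
  have hrankM : rank M = I.ncard := by
    rw [rank, eRank, eRk_eq_of_basis hI, Set.ncard_def]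
  have hd : Module.finrank F W ≤ rank M := by
    have h1 : Module.finrank F W ≤ Module.finrank F (Submodule.span F (f '' I)) :=
      Submodule.finrank_mono (Submodule.span_le.2 hsub)
    have h2 := finrank_span_le_card (R := F) (f '' I)
    have h3 : (f '' I).toFinset.card = (f '' I).ncard := (Set.ncard_eq_toFinset_card' _).symm
    have h4 : (f '' I).ncard ≤ I.ncard := Set.ncard_image_le hIfin
    omega
  -- the injection
  have hch : ∀ P : ↥(pts M), ∃ e, e ∈ P.1 ∧ M.Indep {e} := by
    rintro ⟨P, hP1, hP2⟩
    obtain ⟨e, h1, h2⟩ := exists_nonloop_of_point hP1 hP2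
    exact ⟨e, h1, h2⟩
  choose ep hep1 hep2 using hch
  have hfe0 : ∀ P : ↥(pts M), f (ep P) ≠ 0 := fun P =>
    (indep_singleton_iff hf (by simpa using (hep2 P).subset_ground)).1 (hep2 P)
  set Ψ : (↥(pts M) × {c : F // c ≠ 0}) ⊕ Unit → ↥W :=
    Sum.elim (fun pc => ⟨(pc.2 : F) • f (ep pc.1),
      W.smul_mem _ (Submodule.subset_span ⟨ep pc.1, hep1 pc.1 |> fun h => (pc.1).2.1.subset_ground h, rfl⟩)⟩)
      (fun _ => 0) with hΨ
  have hΨne : ∀ pc : ↥(pts M) × {c : F // c ≠ 0}, (pc.2 : F) • f (ep pc.1) ≠ 0 :=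
    fun pc => smul_ne_zero pc.2.2 (hfe0 pc.1)
  have hinj : Function.Injective Ψ := by
    rintro (pc | u) (pc' | u') h
    · have := psi_inj hM hf ep hep1 hep2 (congrArg Subtype.val h)
      rw [this]
    · exact absurd (congrArg Subtype.val h) (hΨne pc)
    · exact absurd (congrArg Subtype.val h).symm (hΨne pc')
    · rfl
  have hcard := Nat.card_le_card_of_injective Ψ hinj
  have hdom : Nat.card ((↥(pts M) × {c : F // c ≠ 0}) ⊕ Unit)
      = (pts M).ncard * (Fintype.card F - 1) + 1 := by
    haveI : Finite ↥(pts M) := (pts_finite hM).to_subtype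
    rw [Nat.card_sum, Nat.card_prod, Nat.card_coe_set_eq]
    have hc : Nat.card {c : F // c ≠ 0} = Fintype.card F - 1 := by
      have he : {c : F // c ≠ 0} ≃ ↥({(0 : F)}ᶜ : Set F) :=
        Equiv.subtypeEquivRight (by simp)
      rw [Nat.card_congr he, Nat.card_coe_set_eq]
      have := Set.ncard_add_ncard_compl ({(0 : F)} : Set F)
      have h0 : ({(0 : F)} : Set F).ncard = 1 := Set.ncard_singleton _
      have hn : Nat.card F = Fintype.card F := Nat.card_eq_fintype_card
      omega
    rw [hc]
    simp
  have hWcard : Nat.card ↥W = Fintype.card F ^ Module.finrank F W := by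
    rw [Nat.card_eq_fintype_card]
    exact Module.card_eq_pow_finrank
  rw [hdom, hWcard] at hcard
  exact hcard.trans (Nat.pow_le_pow_right Fintype.card_pos hd)

lemma count_eq (hM : M.Finite)
    (hf : ∀ I ⊆ M.E, (M.Indep I ↔ LinearIndependent F fun x : I => f x))
    (hsurj : ∀ v : Fin m → F, v ≠ 0 → ∃ e ∈ M.E, ∃ c : F, c ≠ 0 ∧ v = c • f e) :
    (pts M).ncard * (Fintype.card F - 1) + 1 = Fintype.card F ^ m := by
  classical
  have hch : ∀ P : ↥(pts M), ∃ e, e ∈ P.1 ∧ M.Indep {e} := by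
    rintro ⟨P, hP1, hP2⟩
    obtain ⟨e, h1, h2⟩ := exists_nonloop_of_point hP1 hP2
    exact ⟨e, h1, h2⟩
  choose ep hep1 hep2 using hch
  have hfe0 : ∀ P : ↥(pts M), f (ep P) ≠ 0 := fun P =>
    (indep_singleton_iff hf (by simpa using (hep2 P).subset_ground)).1 (hep2 P)
  set Ψ : (↥(pts M) × {c : F // c ≠ 0}) ⊕ Unit → (Fin m → F) :=
    Sum.elim (fun pc => (pc.2 : F) • f (ep pc.1)) (fun _ => 0) with hΨ
  have hΨne : ∀ pc : ↥(pts M) × {c : F // c ≠ 0}, (pc.2 : F) • f (ep pc.1) ≠ 0 :=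
    fun pc => smul_ne_zero pc.2.2 (hfe0 pc.1)
  have hbij : Function.Bijective Ψ := by
    constructor
    · rintro (pc | u) (pc' | u') h
      · rw [psi_inj hM hf ep hep1 hep2 h]
      · exact absurd h (hΨne pc)
      · exact absurd h.symm (hΨne pc')
      · rfl
    · intro v
      by_cases hv0 : v = 0
      · exact ⟨Sum.inr (), hv0.symm⟩
      · obtain ⟨e, heE, c, hc0, hv⟩ := hsurj v hv0
        have hfe : f e ≠ 0 := fun h0 => hv0 (by rw [hv, h0, smul_zero])
        have hie : M.Indep {e} := (indep_singleton_iff hf heE).2 hfe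
        have hP0 : M.closure {e} ∈ pts M :=
          ⟨flat_closure hM (by simpa using hie.subset_ground), eRk_closure_singleton hie⟩
        have heP0 : e ∈ M.closure {e} :=
          M.subset_closure {e} hie.subset_ground (mem_singleton e)
        set P : ↥(pts M) := ⟨M.closure {e}, hP0⟩ with hP
        obtain ⟨c'', hc''0, hpar⟩ := parallel_of_point hf (eRk_closure_singleton hie)
          (M.closure_subset_ground {e}) heP0 (hep1 P) hie (hep2 P)
        refine ⟨Sum.inl ⟨P, ⟨c * c'', mul_ne_zero hc0 hc''0⟩⟩, ?_⟩
        simp only [hΨ, Sum.elim_inl]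
        rw [mul_smul, ← hpar, ← hv]
  have hdom : Nat.card ((↥(pts M) × {c : F // c ≠ 0}) ⊕ Unit)
      = (pts M).ncard * (Fintype.card F - 1) + 1 := by
    haveI : Finite ↥(pts M) := (pts_finite hM).to_subtype
    rw [Nat.card_sum, Nat.card_prod, Nat.card_coe_set_eq]
    have hc : Nat.card {c : F // c ≠ 0} = Fintype.card F - 1 := by
      have he : {c : F // c ≠ 0} ≃ ↥({(0 : F)}ᶜ : Set F) :=
        Equiv.subtypeEquivRight (by simp)
      rw [Nat.card_congr he, Nat.card_coe_set_eq]
      have := Set.ncard_add_ncard_compl ({(0 : F)} : Set F)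
      have h0 : ({(0 : F)} : Set F).ncard = 1 := Set.ncard_singleton _
      have hn : Nat.card F = Fintype.card F := Nat.card_eq_fintype_card
      omega
    rw [hc]
    simp
  rw [← hdom, Nat.card_eq_of_bijective Ψ hbij, Nat.card_eq_fintype_card, Fintype.card_fun]
  simp

lemma pg_eRank (hM : M.Finite)
    (hf : ∀ I ⊆ M.E, (M.Indep I ↔ LinearIndependent F fun x : I => f x))
    (hsurj : ∀ v : Fin m → F, v ≠ 0 → ∃ e ∈ M.E, ∃ c : F, c ≠ 0 ∧ v = c • f e) :
    eRank M = m := by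
  classical
  haveI : Module.Finite F (Fin m → F) := Module.Finite.pi
  apply le_antisymm
  · refine eRk_le fun I hI hIE => ?_
    have hIfin : I.Finite := hM.ground_finite.subset hIE
    haveI := hIfin.fintype
    have hli := (hf I hIE).1 hI
    have hcard := hli.fintype_card_le_finrank
    rw [Module.finrank_pi, Fintype.card_fin] at hcard
    rw [Set.encard_eq_coe_toFinset_card, Set.toFinset_card]
    exact_mod_cast hcard
  · have hv : ∀ i : Fin m, (Pi.single i (1 : F) : Fin m → F) ≠ 0 := fun i h0 => by
      have := congrFun h0 i
      simp [Pi.single_eq_same] at this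
    choose e heE c hc0 hvc using fun i : Fin m => hsurj (Pi.single i 1) (hv i)
    have hfe : ∀ i, f (e i) = (c i)⁻¹ • (Pi.single i 1 : Fin m → F) := fun i => by
      rw [hvc i, inv_smul_smul₀ (hc0 i)]
    have hg : LinearIndependent F (fun i : Fin m => f (e i)) := by
      have hb := (Pi.basisFun F (Fin m)).linearIndependent
      have hsm := hb.units_smul (fun i => Units.mk0 (c i)⁻¹ (inv_ne_zero (hc0 i)))
      convert hsm using 1
      funext i
      rw [hfe i]
      simp [Pi.basisFun_apply]
    have heinj : Function.Injective e := fun i j hij =>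
      hg.injective (congrArg f hij)
    have hB : M.Indep (range e) := by
      rw [hf _ (range_subset_iff.2 heE)]
      have hcomp := hg.comp _ (Equiv.ofInjective e heinj).symm.injective
      convert hcomp using 1
      funext x
      simp only [Function.comp]
      exact congrArg f (Equiv.apply_ofInjective_symm heinj x).symm
    have hle := le_eRk hB (range_subset_iff.2 heE)
    have hcard : (range e).encard = m := by
      rw [← image_univ, heinj.injOn.encard_image, encard_univ]
      simp
    rwa [hcard] at hle

lemma pts_subsingleton (hM : M.Finite) (hr : eRank M ≤ 1) : (pts M).Subsingleton := by
  rintro P ⟨hF, h1⟩ P' ⟨hF', h1'⟩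
  obtain ⟨e, heP, hie⟩ := exists_nonloop_of_point hF h1
  obtain ⟨e', heP', hie'⟩ := exists_nonloop_of_point hF' h1'
  have hmem : e' ∈ M.closure {e} := by
    by_cases heq : e' = e
    · have : e ∈ M.closure {e} := M.subset_closure {e} hie.subset_ground (mem_singleton e)
      rwa [heq]
    · have hni : ¬ M.Indep (insert e' {e}) := by
        intro hind
        have h2 := le_eRk hind hind.subset_ground
        rw [encard_insert_of_notMem (by simpa using heq), encard_singleton] at h2
        exact absurd (h2.trans hr) (by norm_num)
      have hdep : M.Dep (insert e' {e}) := by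
        rw [Matroid.dep_iff]
        exact ⟨hni, insert_subset (hF'.subset_ground heP') hie.subset_ground⟩
      exact ((hie.insert_dep_iff).1 hdep).1
  rw [point_eq_closure hF h1 heP hie, point_eq_closure hF' h1' heP' hie']
  exact (closure_singleton_eq_of_mem hM hie hie' hmem).symm

end Rep

/-- If `M` is obtained from a `GF(q)`-representable matroid by `k` truncations then
`ε(M) ≤ (q^(r(M)+k)-1)/(q-1)`; and the truncation to rank `n ≥ 2` of `PG(n+k-1,q)`
has exactly `(q^(n+k)-1)/(q-1)` points. -/
theorem statement_16 {α : Type*} (F : Type) [Field F] [Fintype F] (k : ℕ) :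
    (∀ (M M₀ : Matroid α), M.Finite → IsRepresentable M₀ F →
      IsKFoldTruncationOf M M₀ k →
      (eps M : ℚ) ≤ ((Fintype.card F : ℚ) ^ (rank M + k) - 1) / ((Fintype.card F : ℚ) - 1)) ∧
    (∀ (M P : Matroid α) (n : ℕ), 2 ≤ n → M.Finite → IsPG P F (n + k) →
      IsKFoldTruncationOf M P k →
      (eps M : ℚ) = ((Fintype.card F : ℚ) ^ (n + k) - 1) / ((Fintype.card F : ℚ) - 1)) := by
  have hq : 1 < Fintype.card F := Fintype.one_lt_card
  set q := Fintype.card F with hqdef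
  have hq1 : (1 : ℚ) < (q : ℚ) := by exact_mod_cast hq
  have hden : (0 : ℚ) < (q : ℚ) - 1 := by linarith
  constructor
  · rintro M M₀ hMfin ⟨m, f, hf⟩ hk
    have hM₀fin : M₀.Finite := by
      have := hMfin.ground_finite
      rw [hk.ground_eq] at this
      exact ⟨this⟩
    have hepsM : eps M = (pts M).ncard := rfl
    rcases le_or_gt (eRank M) 1 with hle | hgt
    · have heps1 : eps M ≤ 1 := by
        rw [hepsM]
        rcases (pts_subsingleton hMfin hle).eq_empty_or_singleton with h | ⟨a, h⟩
        · simp [h]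
        · simp [h]
      by_cases h0 : eps M = 0
      · rw [h0]
        have hpow : (1 : ℚ) ≤ (q : ℚ) ^ (rank M + k) := one_le_pow₀ (by linarith)
        push_cast
        refine div_nonneg (by linarith) hden.le
      · have heps : eps M = 1 := by omega
        obtain ⟨Pt, hPt⟩ : ∃ Pt, Pt ∈ pts M := by
          rw [hepsM] at h0
          exact Set.nonempty_of_ncard_ne_zero h0
        have h1le : (1 : ℕ∞) ≤ eRank M := by
          have := eRk_le_eRank M Pt
          rwa [hPt.2] at this
        have hrank1 : 1 ≤ rank M := by
          rcases Nat.eq_zero_or_pos (rank M) with h | h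
          · have h00 : eRank M = 0 :=
              (ENat.toNat_eq_zero.1 h).resolve_right (eRank_ne_top hMfin)
            rw [h00] at h1le
            norm_num at h1le
          · exact h
        rw [heps]
        rw [le_div_iff₀ hden]
        have : (q : ℚ) ≤ (q : ℚ) ^ (rank M + k) := le_self_pow₀ (by linarith) (by omega)
        push_cast
        linarith
    · have h2 : 2 ≤ eRank M := by
        rw [show (2 : ℕ∞) = 1 + 1 by norm_num, ENat.add_one_le_iff (by simp)]
        exact hgt
      obtain ⟨hpts, herank⟩ := hk.pts_eq hMfin h2
      have hrank₀ : rank M₀ = rank M + k := by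
        have hne := eRank_ne_top hMfin
        rw [rank, rank, herank]
        lift eRank M to ℕ using hne with b hb
        exact_mod_cast rfl
      have hcount := count_le hM₀fin hf
      have hepseq : eps M = (pts M₀).ncard := by rw [hepsM, hpts]
      rw [le_div_iff₀ hden]
      have hc2 : (((pts M₀).ncard * (q - 1) + 1 : ℕ) : ℚ) ≤ ((q ^ rank M₀ : ℕ) : ℚ) := by
        exact_mod_cast hcount
      push_cast [Nat.cast_sub hq.le] at hc2
      rw [hepseq, ← hrank₀]
      linarith
  · rintro M P n hn hMfin ⟨f, hf, hinjpg, hsurj⟩ hk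
    have hPfin : P.Finite := by
      have := hMfin.ground_finite
      rw [hk.ground_eq] at this
      exact ⟨this⟩
    have hPrank : eRank P = ((n + k : ℕ) : ℕ∞) := pg_eRank hPfin hf hsurj
    have hMrank : eRank M = (n : ℕ∞) := by
      rw [hk.eRank_eq, hPrank,
        show ((n + k : ℕ) : ℕ∞) - ((k : ℕ) : ℕ∞) = ((n + k - k : ℕ) : ℕ∞) by exact_mod_cast rfl,
        Nat.add_sub_cancel]
    have h2 : 2 ≤ eRank M := by
      rw [hMrank]
      exact_mod_cast hn
    obtain ⟨hpts, -⟩ := hk.pts_eq hMfin h2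
    have hcount := count_eq hPfin hf hsurj
    have hepseq : eps M = (pts P).ncard := by
      rw [show eps M = (pts M).ncard from rfl, hpts]
    rw [eq_div_iff (by linarith : (q : ℚ) - 1 ≠ 0)]
    have hc2 : (((pts P).ncard * (q - 1) + 1 : ℕ) : ℚ) = ((q ^ (n + k) : ℕ) : ℚ) := by
      exact_mod_cast hcount
    push_cast [Nat.cast_sub hq.le] at hc2
    rw [hepseq]
    linarith

end GrowthRate
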